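/- Let 1 < p ≤ q and let φ : [0,∞) → [0,∞) be C¹ with φ(0)=0, φ' satisfying φ'(t)/t^{p−1} non-decreasing and φ'(t)/t^{q−1} non-increasing on (0,∞). Then there is a constant c > 0 depending only on p, q such that for all κ ∈ (0,∞) and all x, y ∈ ℝⁿ not both zero: φ(|x−y|) ≤ c·( κ·(φ(|x|) + φ(|y|)) + κ⁻¹·(φ'(|x|+|y|)/(|x|+|y|))·|x−y|² ). -/

import Mathlib

open MeasureTheory Set intervalIntegral

private lemma aux_ftc {φ φ' : ℝ → ℝ}
    (hderiv : ∀ t ∈ Set.Ici (0:ℝ), HasDerivWithinAt φ (φ' t) (Set.Ici 0) t)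
    (hcont : ContinuousOn φ' (Set.Ici (0:ℝ)))
    {a b : ℝ} (ha : 0 ≤ a) (hab : a ≤ b) :
    ∫ s in a..b, φ' s = φ b - φ a := by
  have hsub : Icc a b ⊆ Ici (0:ℝ) := fun x hx => le_trans ha hx.1
  apply integral_eq_sub_of_hasDeriv_right_of_le hab
  · exact fun t ht => ((hderiv t (hsub ht)).continuousWithinAt).mono hsub
  · intro x hx
    exact (hderiv x (le_trans ha (le_of_lt hx.1))).mono
      (fun y hy => le_of_lt (lt_of_le_of_lt (le_trans ha hx.1.le) hy))
  · exact (hcont.mono (by rw [uIcc_of_le hab]; exact hsub)).intervalIntegrable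

/-- From (Inc)_{p-1}: p φ(t) ≤ t φ'(t). -/
private lemma aux_upper {p : ℝ} (hp : 1 < p) {φ φ' : ℝ → ℝ}
    (hφ0 : φ 0 = 0)
    (hderiv : ∀ t ∈ Set.Ici (0:ℝ), HasDerivWithinAt φ (φ' t) (Set.Ici 0) t)
    (hcont : ContinuousOn φ' (Set.Ici (0:ℝ)))
    (hinc : MonotoneOn (fun t => φ' t / t ^ (p - 1)) (Set.Ioi (0:ℝ)))
    {t : ℝ} (ht : 0 < t) : p * φ t ≤ t * φ' t := by
  have hp0 : (0:ℝ) < p := by linarith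
  have h0 : (0:ℝ) ≤ p - 1 := by linarith
  have htp : (0:ℝ) < t ^ (p - 1) := Real.rpow_pos_of_pos ht _
  have hftc : ∫ s in (0:ℝ)..t, φ' s = φ t := by
    rw [aux_ftc hderiv hcont le_rfl ht.le, hφ0, sub_zero]
  set c := φ' t / t ^ (p - 1) with hc
  have hint1 : IntervalIntegrable φ' volume 0 t :=
    (hcont.mono (by rw [uIcc_of_le ht.le]; exact fun x hx => hx.1)).intervalIntegrable
  have hint2 : IntervalIntegrable (fun s => c * s ^ (p - 1)) volume 0 t :=
    (continuous_const.mul (Real.continuous_rpow_const h0)).intervalIntegrable 0 t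
  have hae : ∀ᵐ s ∂(volume.restrict (Icc (0:ℝ) t)), φ' s ≤ c * s ^ (p - 1) := by
    have h1 : ∀ᵐ s ∂(volume.restrict (Icc (0:ℝ) t)), s ∈ Icc (0:ℝ) t :=
      ae_restrict_mem measurableSet_Icc
    have h2 : ∀ᵐ (s : ℝ), s ≠ (0:ℝ) := by
      rw [ae_iff]
      simpa using measure_singleton (0:ℝ)
    filter_upwards [h1, ae_restrict_of_ae h2] with s hs hs0
    have hspos : 0 < s := lt_of_le_of_ne hs.1 (Ne.symm hs0)
    have hm := hinc (mem_Ioi.mpr hspos) (mem_Ioi.mpr ht) hs.2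
    have hsp : 0 < s ^ (p - 1) := Real.rpow_pos_of_pos hspos _
    calc φ' s = φ' s / s ^ (p - 1) * s ^ (p - 1) := by field_simp
      _ ≤ c * s ^ (p - 1) := mul_le_mul_of_nonneg_right hm hsp.le
  have hle := integral_mono_ae_restrict ht.le hint1 hint2 hae
  have hval : ∫ s in (0:ℝ)..t, c * s ^ (p - 1) = c * (t ^ p / p) := by
    rw [intervalIntegral.integral_const_mul, integral_rpow (Or.inl (by linarith : (-1:ℝ) < p - 1))]
    rw [sub_add_cancel, Real.zero_rpow (by linarith : p ≠ 0)]
    ring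
  rw [hftc, hval] at hle
  have hct : c * (t ^ p / p) = t * φ' t / p := by
    have ht1 : t ^ p = t ^ (p - 1) * t := by
      rw [Real.rpow_sub ht, Real.rpow_one]
      field_simp
    rw [hc, ht1]
    field_simp
  rw [hct] at hle
  have := mul_le_mul_of_nonneg_left hle hp0.le
  have heq : p * (t * φ' t / p) = t * φ' t := by field_simp
  linarith

/-- From (Dec)_{q-1}: t φ'(t) ≤ q φ(t). -/
private lemma aux_lower {q : ℝ} (hq : 1 < q) {φ φ' : ℝ → ℝ}
    (hφ0 : φ 0 = 0)
    (hderiv : ∀ t ∈ Set.Ici (0:ℝ), HasDerivWithinAt φ (φ' t) (Set.Ici 0) t)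
    (hcont : ContinuousOn φ' (Set.Ici (0:ℝ)))
    (hdec : AntitoneOn (fun t => φ' t / t ^ (q - 1)) (Set.Ioi (0:ℝ)))
    {t : ℝ} (ht : 0 < t) : t * φ' t ≤ q * φ t := by
  have hq0 : (0:ℝ) < q := by linarith
  have h0 : (0:ℝ) ≤ q - 1 := by linarith
  have htp : (0:ℝ) < t ^ (q - 1) := Real.rpow_pos_of_pos ht _
  have hftc : ∫ s in (0:ℝ)..t, φ' s = φ t := by
    rw [aux_ftc hderiv hcont le_rfl ht.le, hφ0, sub_zero]
  set c := φ' t / t ^ (q - 1) with hc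
  have hint1 : IntervalIntegrable φ' volume 0 t :=
    (hcont.mono (by rw [uIcc_of_le ht.le]; exact fun x hx => hx.1)).intervalIntegrable
  have hint2 : IntervalIntegrable (fun s => c * s ^ (q - 1)) volume 0 t :=
    (continuous_const.mul (Real.continuous_rpow_const h0)).intervalIntegrable 0 t
  have hae : ∀ᵐ s ∂(volume.restrict (Icc (0:ℝ) t)), c * s ^ (q - 1) ≤ φ' s := by
    have h1 : ∀ᵐ s ∂(volume.restrict (Icc (0:ℝ) t)), s ∈ Icc (0:ℝ) t :=
      ae_restrict_mem measurableSet_Icc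
    have h2 : ∀ᵐ (s : ℝ), s ≠ (0:ℝ) := by
      rw [ae_iff]
      simpa using measure_singleton (0:ℝ)
    filter_upwards [h1, ae_restrict_of_ae h2] with s hs hs0
    have hspos : 0 < s := lt_of_le_of_ne hs.1 (Ne.symm hs0)
    have hm := hdec (mem_Ioi.mpr hspos) (mem_Ioi.mpr ht) hs.2
    have hsp : 0 < s ^ (q - 1) := Real.rpow_pos_of_pos hspos _
    calc c * s ^ (q - 1) ≤ φ' s / s ^ (q - 1) * s ^ (q - 1) :=
          mul_le_mul_of_nonneg_right hm hsp.le
      _ = φ' s := by field_simp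
  have hle := integral_mono_ae_restrict ht.le hint2 hint1 hae
  have hval : ∫ s in (0:ℝ)..t, c * s ^ (q - 1) = c * (t ^ q / q) := by
    rw [intervalIntegral.integral_const_mul, integral_rpow (Or.inl (by linarith : (-1:ℝ) < q - 1))]
    rw [sub_add_cancel, Real.zero_rpow (by linarith : q ≠ 0)]
    ring
  rw [hftc, hval] at hle
  have hct : c * (t ^ q / q) = t * φ' t / q := by
    have ht1 : t ^ q = t ^ (q - 1) * t := by
      rw [Real.rpow_sub ht, Real.rpow_one]
      field_simp
    rw [hc, ht1]
    field_simp
  rw [hct] at hle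
  have := mul_le_mul_of_nonneg_left hle hq0.le
  have heq : q * (t * φ' t / q) = t * φ' t := by field_simp
  linarith

set_option maxHeartbeats 1000000 in
/-- Orlicz-type splitting: if φ ∈ C¹([0,∞)), φ(0)=0, with φ' satisfying
(Inc)_{p−1} and (Dec)_{q−1}, then there is c > 0 depending only on p, q such that for
all κ > 0 and all x, y ∈ ℝⁿ not both zero,
φ(|x−y|) ≤ c(κ(φ(|x|) + φ(|y|)) + κ⁻¹ (φ'(|x|+|y|)/(|x|+|y|))|x−y|²). -/
theorem stmt_19 (p q : ℝ) (hp : 1 < p) (hpq : p ≤ q) :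
    ∃ c > 0, ∀ (n : ℕ) (φ φ' : ℝ → ℝ),
      φ 0 = 0 →
      (∀ t, 0 ≤ t → 0 ≤ φ t) →
      (∀ t ∈ Set.Ici (0:ℝ), HasDerivWithinAt φ (φ' t) (Set.Ici 0) t) →
      ContinuousOn φ' (Set.Ici (0:ℝ)) →
      MonotoneOn (fun t => φ' t / t ^ (p - 1)) (Set.Ioi (0:ℝ)) →
      AntitoneOn (fun t => φ' t / t ^ (q - 1)) (Set.Ioi (0:ℝ)) →
      ∀ κ : ℝ, 0 < κ → ∀ x y : EuclideanSpace ℝ (Fin n), 0 < ‖x‖ + ‖y‖ →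
        φ ‖x - y‖ ≤ c * (κ * (φ ‖x‖ + φ ‖y‖) +
          κ⁻¹ * (φ' (‖x‖ + ‖y‖) / (‖x‖ + ‖y‖)) * ‖x - y‖ ^ 2) := by
  have hq1 : 1 < q := lt_of_lt_of_le hp hpq
  have h2q : (1:ℝ) ≤ (2:ℝ) ^ q := Real.one_le_rpow (by norm_num) (by linarith)
  have hcpos : 0 < q * (2:ℝ) ^ q := mul_pos (by linarith) (by linarith)
  refine ⟨q * (2:ℝ) ^ q, hcpos, ?_⟩
  intro n φ φ' hφ0 hφpos hderiv hcont hinc hdec κ hκ x y hs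
  set a : ℝ := ‖x‖ with ha_def
  set b : ℝ := ‖y‖ with hb_def
  set d : ℝ := ‖x - y‖ with hd_def
  set s : ℝ := a + b with hs_def
  have ha : 0 ≤ a := norm_nonneg x
  have hb : 0 ≤ b := norm_nonneg y
  have hd0 : 0 ≤ d := norm_nonneg _
  have hdle : d ≤ s := norm_sub_le x y
  have hφa : 0 ≤ φ a := hφpos a ha
  have hφb : 0 ≤ φ b := hφpos b hb
  -- φ' is nonnegative on (0,∞)
  have hφ'nonneg : ∀ t : ℝ, 0 < t → 0 ≤ φ' t := by
    intro t ht
    have h1 := aux_upper hp hφ0 hderiv hcont hinc ht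
    have h2 := hφpos t ht.le
    nlinarith
  have hφ's : 0 ≤ φ' s := hφ'nonneg s hs
  have hratio : 0 ≤ φ' s / s := div_nonneg hφ's hs.le
  have hXnn : 0 ≤ κ⁻¹ * (φ' s / s) * d ^ 2 := by positivity
  have hYnn : 0 ≤ κ * (φ a + φ b) := by positivity
  -- doubling: for u > 0, φ (2u) ≤ 2^q * φ u
  have hdouble : ∀ u : ℝ, 0 < u → φ (2 * u) ≤ (2:ℝ) ^ q * φ u := by
    intro u hu
    have h0 : (0:ℝ) ≤ q - 1 := by linarith
    have hup : (0:ℝ) < u ^ (q - 1) := Real.rpow_pos_of_pos hu _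
    have hftc : ∫ t in u..(2*u), φ' t = φ (2*u) - φ u :=
      aux_ftc hderiv hcont hu.le (by linarith)
    set c := φ' u / u ^ (q - 1) with hc
    have hsub : Icc u (2*u) ⊆ Ici (0:ℝ) := fun z hz => le_trans hu.le hz.1
    have hint1 : IntervalIntegrable φ' volume u (2*u) :=
      (hcont.mono (by rw [uIcc_of_le (by linarith)]; exact hsub)).intervalIntegrable
    have hint2 : IntervalIntegrable (fun t => c * t ^ (q - 1)) volume u (2*u) :=
      (continuous_const.mul (Real.continuous_rpow_const h0)).intervalIntegrable _ _
    have hle : ∫ t in u..(2*u), φ' t ≤ ∫ t in u..(2*u), c * t ^ (q - 1) := by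
      apply integral_mono_on (by linarith) hint1 hint2
      intro t ht
      have htpos : 0 < t := lt_of_lt_of_le hu ht.1
      have hm := hdec (mem_Ioi.mpr hu) (mem_Ioi.mpr htpos) ht.1
      have htp : 0 < t ^ (q - 1) := Real.rpow_pos_of_pos htpos _
      calc φ' t = φ' t / t ^ (q - 1) * t ^ (q - 1) := by field_simp
        _ ≤ c * t ^ (q - 1) := mul_le_mul_of_nonneg_right hm htp.le
    have hval : ∫ t in u..(2*u), c * t ^ (q - 1)
        = c * (((2*u) ^ q - u ^ q) / q) := by
      rw [intervalIntegral.integral_const_mul, integral_rpow (Or.inl (by linarith : (-1:ℝ) < q - 1))]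
      rw [sub_add_cancel]
    have h2u : (2*u) ^ q = (2:ℝ) ^ q * u ^ q := Real.mul_rpow (by norm_num) hu.le
    have huq : u ^ q = u ^ (q - 1) * u := by
      rw [Real.rpow_sub hu, Real.rpow_one]
      field_simp
    have hlow := aux_lower hq1 hφ0 hderiv hcont hdec hu
    -- c * ((2^q - 1) u^q / q) = (u φ' u) * (2^q-1)/q ≤ φ u * (2^q - 1)
    have hcu : c * (((2*u) ^ q - u ^ q) / q) = (u * φ' u) * (((2:ℝ) ^ q - 1) / q) := by
      rw [h2u, hc, huq]
      field_simp
    have hq0 : (0:ℝ) < q := by linarith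
    have hce : (u * φ' u) * (((2:ℝ) ^ q - 1) / q) ≤ (q * φ u) * (((2:ℝ) ^ q - 1) / q) := by
      exact mul_le_mul_of_nonneg_right hlow
        (div_nonneg (by linarith) (by linarith))
    have hqe : (q * φ u) * (((2:ℝ) ^ q - 1) / q) = ((2:ℝ) ^ q - 1) * φ u := by
      field_simp
    nlinarith [hftc, hle, hval]
  -- monotonicity on positive reals
  have hmonoφ : ∀ u v : ℝ, 0 < u → u ≤ v → φ u ≤ φ v := by
    intro u v hu huv
    have hftc : ∫ t in u..v, φ' t = φ v - φ u := aux_ftc hderiv hcont hu.le huv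
    have hsub : Icc u v ⊆ Ici (0:ℝ) := fun z hz => le_trans hu.le hz.1
    have hnn : 0 ≤ ∫ t in u..v, φ' t := by
      apply integral_nonneg huv
      intro t ht
      exact hφ'nonneg t (lt_of_lt_of_le hu ht.1)
    linarith
  -- bound φ s ≤ 2^q (φ a + φ b)
  have hφs : φ s ≤ (2:ℝ) ^ q * (φ a + φ b) := by
    set m : ℝ := max a b with hm_def
    have hml : a ≤ m := le_max_left a b
    have hmr : b ≤ m := le_max_right a b
    have hsm : s ≤ 2 * m := by simp only [hs_def]; linarith
    have hm : 0 < m := by linarith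
    have h1 : φ s ≤ φ (2 * m) := hmonoφ s (2*m) hs hsm
    have h2 : φ (2 * m) ≤ (2:ℝ) ^ q * φ m := hdouble m hm
    have h3 : φ m ≤ φ a + φ b := by
      rcases max_cases a b with ⟨h1', _⟩ | ⟨h1', _⟩ <;> rw [hm_def, h1'] <;> linarith
    have h4 : (2:ℝ) ^ q * φ m ≤ (2:ℝ) ^ q * (φ a + φ b) :=
      mul_le_mul_of_nonneg_left h3 (by linarith)
    linarith
  -- main case split on d
  rcases eq_or_lt_of_le hd0 with hd | hd
  · rw [← hd, hφ0]
    have h0' : κ⁻¹ * (φ' s / s) * (0:ℝ) ^ 2 = 0 := by ring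
    have hin : 0 ≤ κ * (φ a + φ b) + κ⁻¹ * (φ' s / s) * (0:ℝ) ^ 2 := by
      rw [h0']; linarith
    exact mul_nonneg hcpos.le hin
  -- key chain
  have h1 : p * φ d ≤ d * φ' d := aux_upper hp hφ0 hderiv hcont hinc hd
  have hφ'd : 0 ≤ φ' d := hφ'nonneg d hd
  have h2 : φ' d ≤ φ' s := by
    have hm := hinc (mem_Ioi.mpr hd) (mem_Ioi.mpr hs) hdle
    have hdp : 0 < d ^ (p - 1) := Real.rpow_pos_of_pos hd _
    have hsp : 0 < s ^ (p - 1) := Real.rpow_pos_of_pos hs _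
    have hdps : d ^ (p - 1) ≤ s ^ (p - 1) :=
      Real.rpow_le_rpow hd0 hdle (by linarith)
    calc φ' d = φ' d / d ^ (p - 1) * d ^ (p - 1) := by field_simp
      _ ≤ φ' s / s ^ (p - 1) * d ^ (p - 1) := mul_le_mul_of_nonneg_right hm hdp.le
      _ ≤ φ' s / s ^ (p - 1) * s ^ (p - 1) := by
          apply mul_le_mul_of_nonneg_left hdps (div_nonneg hφ's hsp.le)
      _ = φ' s := by field_simp
  have hφd : 0 ≤ φ d := hφpos d hd.le
  have h3 : φ d ≤ d * φ' s := by nlinarith [mul_le_mul_of_nonneg_left h2 hd0]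
  have h5 : d * s ≤ (κ * s ^ 2 + κ⁻¹ * d ^ 2) / 2 := by
    have expand : κ * ((κ * s ^ 2 + κ⁻¹ * d ^ 2) / 2 - d * s) = (κ * s - d) ^ 2 / 2 := by
      field_simp
      ring
    have hmul : κ * 0 ≤ κ * ((κ * s ^ 2 + κ⁻¹ * d ^ 2) / 2 - d * s) := by
      rw [mul_zero, expand]; positivity
    have hX := le_of_mul_le_mul_left hmul hκ
    linarith
  have h4 : d * φ' s = (φ' s / s) * (d * s) := by
    field_simp
  have h6 : φ d ≤ (φ' s / s) * ((κ * s ^ 2 + κ⁻¹ * d ^ 2) / 2) := by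
    calc φ d ≤ d * φ' s := h3
      _ = (φ' s / s) * (d * s) := h4
      _ ≤ (φ' s / s) * ((κ * s ^ 2 + κ⁻¹ * d ^ 2) / 2) :=
          mul_le_mul_of_nonneg_left h5 hratio
  have h7 : s * φ' s ≤ q * φ s := aux_lower hq1 hφ0 hderiv hcont hdec hs
  have hsplit : (φ' s / s) * ((κ * s ^ 2 + κ⁻¹ * d ^ 2) / 2)
      = (κ / 2) * (s * φ' s) + (1 / 2) * (κ⁻¹ * (φ' s / s) * d ^ 2) := by
    field_simp
  have h8 : (κ / 2) * (s * φ' s) ≤ (κ / 2) * (q * ((2:ℝ) ^ q * (φ a + φ b))) := by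
    apply mul_le_mul_of_nonneg_left _ (by positivity)
    nlinarith
  nlinarith [h6, hsplit, h8, hXnn, hYnn, hcpos, mul_le_mul_of_nonneg_right h2q hXnn]
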